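/- Let {X^{(t)}} be generated by the ERALM method under block-Lipschitz smoothness with constant L, constant step size α ∈ (0,1] and regularization parameter λ > 0 in every block. Then the per-iteration stationarity bound holds: R(X^{(t)}) ≤ (f(X^{(t)}) − f(X^{(t+1)}))/α + N λ h̄ + 2 d̄² L N (2√N + 1) α, where R = Σᵢ R_i with R_i(X) = max_{T∈U(a_i,b_i)} ⟨∇_i f(X), X_i − T⟩, h̄ = −minᵢ h(a_i b_iᵀ), and d̄ = maxᵢ min{√(m_i)‖a_i‖_∞, √(n_i)‖b_i‖_∞}. -/

import Mathlib

/-- The transport polytope `U(a,b)`. -/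
def transportPolytope {m n : ℕ} (a : Fin m → ℝ) (b : Fin n → ℝ) :
    Set (Matrix (Fin m) (Fin n) ℝ) :=
  {T | (∀ j k, 0 ≤ T j k) ∧ (∀ j, ∑ k, T j k = a j) ∧ (∀ k, ∑ j, T j k = b k)}

/-- The Frobenius norm. -/
noncomputable def frob {m n : ℕ} (T : Matrix (Fin m) (Fin n) ℝ) : ℝ :=
  Real.sqrt (∑ j, ∑ k, (T j k) ^ 2)

/-- The Frobenius norm of a tuple of blocks. -/
noncomputable def frobTotal {N : ℕ} {m n : Fin N → ℕ}
    (X : ∀ i, Matrix (Fin (m i)) (Fin (n i)) ℝ) : ℝ :=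
  Real.sqrt (∑ i, ∑ j, ∑ k, (X i j k) ^ 2)

/-- The Frobenius inner product. -/
noncomputable def finner {m n : ℕ} (A B : Matrix (Fin m) (Fin n) ℝ) : ℝ :=
  ∑ j, ∑ k, A j k * B j k

/-- The negative entropy. -/
noncomputable def negEntropy {m n : ℕ} (T : Matrix (Fin m) (Fin n) ℝ) : ℝ :=
  ∑ j, ∑ k, T j k * (Real.log (T j k) - 1)

/-- The block stationarity residual
`R_i(X) = max_{T ∈ U(a_i,b_i)} ⟨∇_i f(X), X_i − T⟩`. -/
noncomputable def blockResidual {N : ℕ} {m n : Fin N → ℕ}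
    (a : ∀ i, Fin (m i) → ℝ) (b : ∀ i, Fin (n i) → ℝ)
    (gradf : (∀ i, Matrix (Fin (m i)) (Fin (n i)) ℝ) →
      ∀ i, Matrix (Fin (m i)) (Fin (n i)) ℝ)
    (X : ∀ i, Matrix (Fin (m i)) (Fin (n i)) ℝ) (i : Fin N) : ℝ :=
  ⨆ T : transportPolytope (a i) (b i), finner (gradf X i) (X i - (T : Matrix _ _ ℝ))

section Helpers

noncomputable def toEuc {m n : ℕ} (T : Matrix (Fin m) (Fin n) ℝ) :
    EuclideanSpace ℝ (Fin m × Fin n) := WithLp.toLp 2 (fun p : Fin m × Fin n => T p.1 p.2)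

lemma frob_eq {m n : ℕ} (T : Matrix (Fin m) (Fin n) ℝ) : frob T = ‖toEuc T‖ := by
  rw [EuclideanSpace.norm_eq]
  simp [frob, toEuc, Fintype.sum_prod_type, sq_abs]

lemma finner_eq {m n : ℕ} (A B : Matrix (Fin m) (Fin n) ℝ) :
    finner A B = inner ℝ (toEuc A) (toEuc B) := by
  simp [finner, toEuc, PiLp.inner_apply, RCLike.inner_apply, Fintype.sum_prod_type, mul_comm]

lemma frob_nonneg {m n : ℕ} (T : Matrix (Fin m) (Fin n) ℝ) : 0 ≤ frob T :=
  Real.sqrt_nonneg _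

lemma frob_sub_le {m n : ℕ} (A B : Matrix (Fin m) (Fin n) ℝ) :
    frob (A - B) ≤ frob A + frob B := by
  have : toEuc (A - B) = toEuc A - toEuc B := rfl
  rw [frob_eq, frob_eq, frob_eq, this]; exact norm_sub_le _ _

lemma abs_finner_le {m n : ℕ} (A B : Matrix (Fin m) (Fin n) ℝ) :
    |finner A B| ≤ frob A * frob B := by
  rw [finner_eq, frob_eq, frob_eq]; exact abs_real_inner_le_norm _ _

lemma frob_smul {m n : ℕ} (c : ℝ) (A : Matrix (Fin m) (Fin n) ℝ) :
    frob (c • A) = |c| * frob A := by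
  have : toEuc (c • A) = c • toEuc A := rfl
  rw [frob_eq, frob_eq, this, norm_smul]; simp

lemma finner_sub_right {m n : ℕ} (A B C : Matrix (Fin m) (Fin n) ℝ) :
    finner A (B - C) = finner A B - finner A C := by
  simp [finner, mul_sub, Finset.sum_sub_distrib]

lemma finner_sub_left {m n : ℕ} (A B C : Matrix (Fin m) (Fin n) ℝ) :
    finner (A - B) C = finner A C - finner B C := by
  simp [finner, sub_mul, Finset.sum_sub_distrib]

lemma finner_smul_right {m n : ℕ} (c : ℝ) (A B : Matrix (Fin m) (Fin n) ℝ) :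
    finner A (c • B) = c * finner A B := by
  simp [finner, Finset.mul_sum]
  congr 1; ext j; congr 1; ext k; ring

lemma sum_sq_le_sq_sum {ι : Type*} [Fintype ι] (x : ι → ℝ) (hx : ∀ k, 0 ≤ x k) :
    ∑ k, (x k) ^ 2 ≤ (∑ k, x k) ^ 2 := by
  have h : ∀ k : ι, (x k) ^ 2 ≤ x k * ∑ l, x l := by
    intro k
    have : x k ≤ ∑ l, x l := Finset.single_le_sum (fun l _ => hx l) (Finset.mem_univ k)
    calc (x k)^2 = x k * x k := sq (x k) ▸ by ring
    _ ≤ x k * ∑ l, x l := by exact mul_le_mul_of_nonneg_left this (hx k)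
  calc ∑ k, (x k)^2 ≤ ∑ k, x k * ∑ l, x l := Finset.sum_le_sum (fun k _ => h k)
  _ = (∑ k, x k)^2 := by rw [← Finset.sum_mul]; ring

lemma frob_le_row {m n : ℕ} {a : Fin m → ℝ} {b : Fin n → ℝ} {s : ℝ}
    {T : Matrix (Fin m) (Fin n) ℝ} (hT : T ∈ transportPolytope a b)
    (hs : ∀ j, a j ≤ s) (h0 : 0 ≤ s) : frob T ≤ Real.sqrt m * s := by
  obtain ⟨hpos, hrow, _⟩ := hT
  have key : ∑ j, ∑ k, (T j k)^2 ≤ (m : ℝ) * s^2 := by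
    calc ∑ j, ∑ k, (T j k)^2 ≤ ∑ j : Fin m, s^2 := by
          apply Finset.sum_le_sum; intro j _
          calc ∑ k, (T j k)^2 ≤ (∑ k, T j k)^2 := sum_sq_le_sq_sum _ (hpos j)
          _ = (a j)^2 := by rw [hrow j]
          _ ≤ s^2 := by
            have h1 : 0 ≤ a j := (hrow j) ▸ Finset.sum_nonneg (fun k _ => hpos j k)
            exact pow_le_pow_left₀ h1 (hs j) 2
    _ = (m : ℝ) * s^2 := by simp [mul_comm]
  calc frob T ≤ Real.sqrt ((m:ℝ) * s^2) := Real.sqrt_le_sqrt key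
  _ = Real.sqrt m * s := by rw [Real.sqrt_mul (by positivity), Real.sqrt_sq h0]

lemma frob_le_col {m n : ℕ} {a : Fin m → ℝ} {b : Fin n → ℝ} {s : ℝ}
    {T : Matrix (Fin m) (Fin n) ℝ} (hT : T ∈ transportPolytope a b)
    (hs : ∀ k, b k ≤ s) (h0 : 0 ≤ s) : frob T ≤ Real.sqrt n * s := by
  obtain ⟨hpos, _, hcol⟩ := hT
  have key : ∑ j, ∑ k, (T j k)^2 ≤ (n : ℝ) * s^2 := by
    rw [Finset.sum_comm]
    calc ∑ k, ∑ j, (T j k)^2 ≤ ∑ k : Fin n, s^2 := by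
          apply Finset.sum_le_sum; intro k _
          calc ∑ j, (T j k)^2 ≤ (∑ j, T j k)^2 := sum_sq_le_sq_sum _ (fun j => hpos j k)
          _ = (b k)^2 := by rw [hcol k]
          _ ≤ s^2 := by
            have h1 : 0 ≤ b k := (hcol k) ▸ Finset.sum_nonneg (fun j _ => hpos j k)
            exact pow_le_pow_left₀ h1 (hs k) 2
    _ = (n : ℝ) * s^2 := by simp [mul_comm]
  calc frob T ≤ Real.sqrt ((n:ℝ) * s^2) := Real.sqrt_le_sqrt key
  _ = Real.sqrt n * s := by rw [Real.sqrt_mul (by positivity), Real.sqrt_sq h0]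

lemma convex_mem {m n : ℕ} {a : Fin m → ℝ} {b : Fin n → ℝ} {α : ℝ}
    (hα0 : 0 ≤ α) (hα1 : α ≤ 1)
    {T T' : Matrix (Fin m) (Fin n) ℝ} (hT : T ∈ transportPolytope a b)
    (hT' : T' ∈ transportPolytope a b) :
    (1 - α) • T + α • T' ∈ transportPolytope a b := by
  obtain ⟨h1, h2, h3⟩ := hT
  obtain ⟨h1', h2', h3'⟩ := hT'
  refine ⟨fun j k => ?_, fun j => ?_, fun k => ?_⟩
  · have := h1 j k; have := h1' j k
    simp only [Matrix.add_apply, Matrix.smul_apply, smul_eq_mul]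
    nlinarith
  · simp only [Matrix.add_apply, Matrix.smul_apply, smul_eq_mul,
      Finset.sum_add_distrib, ← Finset.mul_sum, h2 j, h2' j]
    ring
  · simp only [Matrix.add_apply, Matrix.smul_apply, smul_eq_mul,
      Finset.sum_add_distrib, ← Finset.mul_sum, h3 k, h3' k]
    ring

lemma prodMem {m n : ℕ} {a : Fin m → ℝ} {b : Fin n → ℝ}
    (ha : ∀ j, 0 < a j) (hb : ∀ k, 0 < b k)
    (hsa : ∑ j, a j = 1) (hsb : ∑ k, b k = 1) :
    (fun j k => a j * b k : Matrix (Fin m) (Fin n) ℝ) ∈ transportPolytope a b := by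
  refine ⟨fun j k => le_of_lt (mul_pos (ha j) (hb k)), fun j => ?_, fun k => ?_⟩
  · rw [← Finset.mul_sum, hsb, mul_one]
  · rw [← Finset.sum_mul, hsa, one_mul]

lemma negEntropy_nonpos {m n : ℕ} {a : Fin m → ℝ} {b : Fin n → ℝ}
    (hsa : ∑ j, a j = 1) {T : Matrix (Fin m) (Fin n) ℝ}
    (hT : T ∈ transportPolytope a b) : negEntropy T ≤ 0 := by
  obtain ⟨hpos, hrow, _⟩ := hT
  apply Finset.sum_nonpos; intro j _
  apply Finset.sum_nonpos; intro k _
  have h01 : T j k ≤ 1 := by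
    have h1 : T j k ≤ a j := by
      rw [← hrow j]
      exact Finset.single_le_sum (fun l _ => hpos j l) (Finset.mem_univ k)
    have h2 : a j ≤ 1 := by
      rw [← hsa]
      refine Finset.single_le_sum (fun l _ => ?_) (Finset.mem_univ j)
      rw [← hrow l]; exact Finset.sum_nonneg (fun k _ => hpos l k)
    linarith
  have hlog : Real.log (T j k) ≤ 0 := Real.log_nonpos (hpos j k) h01
  have := hpos j k
  nlinarith

lemma gibbs_aux (p q : ℝ) (hp : 0 ≤ p) (hq : 0 < q) :
    p - q ≤ p * Real.log p - p * Real.log q := by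
  rcases eq_or_lt_of_le hp with h | h
  · simp [← h]; linarith
  · have hqp : 0 < q / p := by positivity
    have h1 := Real.log_le_sub_one_of_pos hqp
    rw [Real.log_div (ne_of_gt hq) (ne_of_gt h)] at h1
    have h2 : p * (Real.log q - Real.log p) ≤ p * (q / p - 1) :=
      mul_le_mul_of_nonneg_left h1 hp
    have h3 : p * (q / p - 1) = q - p := by field_simp
    nlinarith

lemma gibbs {m n : ℕ} {a : Fin m → ℝ} {b : Fin n → ℝ}
    (ha : ∀ j, 0 < a j) (hb : ∀ k, 0 < b k)
    (hsa : ∑ j, a j = 1) (hsb : ∑ k, b k = 1)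
    {T : Matrix (Fin m) (Fin n) ℝ} (hT : T ∈ transportPolytope a b) :
    negEntropy (fun j k => a j * b k) ≤ negEntropy T := by
  obtain ⟨hpos, hrow, hcol⟩ := hT
  have hmarg : ∀ (S : Matrix (Fin m) (Fin n) ℝ), (∀ j, ∑ k, S j k = a j) →
      (∀ k, ∑ j, S j k = b k) →
      ∑ j, ∑ k, S j k * Real.log (a j * b k)
        = ∑ j, a j * Real.log (a j) + ∑ k, b k * Real.log (b k) := by
    intro S hr hc
    have : ∀ j k, S j k * Real.log (a j * b k)
        = S j k * Real.log (a j) + S j k * Real.log (b k) := by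
      intro j k
      rw [Real.log_mul (ne_of_gt (ha j)) (ne_of_gt (hb k))]; ring
    simp_rw [this, Finset.sum_add_distrib]
    congr 1
    · congr 1; ext j; rw [← Finset.sum_mul, hr j]
    · rw [Finset.sum_comm]; congr 1; ext k; rw [← Finset.sum_mul, hc k]
  have hTm : ∑ j, ∑ k, T j k = 1 := by
    calc ∑ j, ∑ k, T j k = ∑ j, a j := by simp_rw [hrow]
    _ = 1 := hsa
  have hPm : ∑ j, ∑ k, a j * b k = 1 := by
    simp_rw [← Finset.mul_sum, hsb, mul_one]; exact hsa
  have hProw : ∀ j, ∑ k, a j * b k = a j := fun j => by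
    rw [← Finset.mul_sum, hsb, mul_one]
  have hPcol : ∀ k, ∑ j, a j * b k = b k := fun k => by
    rw [← Finset.sum_mul, hsa, one_mul]
  have key : ∑ j, ∑ k, (T j k - a j * b k)
      ≤ ∑ j, ∑ k, (T j k * Real.log (T j k) - T j k * Real.log (a j * b k)) := by
    apply Finset.sum_le_sum; intro j _
    apply Finset.sum_le_sum; intro k _
    exact gibbs_aux _ _ (hpos j k) (mul_pos (ha j) (hb k))
  have hlhs : ∑ j, ∑ k, (T j k - a j * b k) = 0 := by
    simp_rw [Finset.sum_sub_distrib]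
    rw [hTm, hPm]; ring
  have hrhs : ∑ j, ∑ k, (T j k * Real.log (T j k) - T j k * Real.log (a j * b k))
      = ∑ j, ∑ k, T j k * Real.log (T j k)
        - (∑ j, a j * Real.log (a j) + ∑ k, b k * Real.log (b k)) := by
    simp_rw [Finset.sum_sub_distrib]
    rw [hmarg T hrow hcol]
  have expand : ∀ (S : Matrix (Fin m) (Fin n) ℝ),
      negEntropy S = ∑ j, ∑ k, S j k * Real.log (S j k) - ∑ j, ∑ k, S j k := by
    intro S
    simp [negEntropy, mul_sub, Finset.sum_sub_distrib]
  rw [expand T, hTm]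
  have hE := expand (fun j k => a j * b k)
  have hM := hmarg (fun j k => a j * b k) hProw hPcol
  beta_reduce at hE hM
  rw [hPm, hM] at hE
  rw [hlhs, hrhs] at key
  linarith

end Helpers

/-- Per-iteration stationarity bound for the ERALM method: along iterates generated by the
entropy-regularized alternating linearized minimization with constant step size
`α ∈ (0,1]`, regularization parameter `λ > 0` and block-Lipschitz gradients with constant
`L`, one has `R(X^{(t)}) ≤ (f(X^{(t)}) − f(X^{(t+1)}))/α + Nλh̄ + 2d̄²LN(2√N+1)α`. -/
theorem eralm_per_iteration_bound {N : ℕ} (hN : 0 < N) {m n : Fin N → ℕ}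
    (a : ∀ i, Fin (m i) → ℝ) (b : ∀ i, Fin (n i) → ℝ)
    (ha : ∀ i j, 0 < a i j) (hb : ∀ i k, 0 < b i k)
    (hsa : ∀ i, ∑ j, a i j = 1) (hsb : ∀ i, ∑ k, b i k = 1)
    (f : (∀ i, Matrix (Fin (m i)) (Fin (n i)) ℝ) → ℝ)
    (gradf : (∀ i, Matrix (Fin (m i)) (Fin (n i)) ℝ) →
      ∀ i, Matrix (Fin (m i)) (Fin (n i)) ℝ)
    (L : ℝ) (hL : 0 < L)
    -- block-Lipschitz smoothness: Lipschitz gradients and the descent inequality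
    (hlip : ∀ X X' : ∀ i, Matrix (Fin (m i)) (Fin (n i)) ℝ,
      (∀ i, X i ∈ transportPolytope (a i) (b i)) →
      (∀ i, X' i ∈ transportPolytope (a i) (b i)) →
      ∀ i, frob (gradf X i - gradf X' i) ≤ L * frobTotal (fun i => X i - X' i))
    (hdesc : ∀ X : ∀ i, Matrix (Fin (m i)) (Fin (n i)) ℝ,
      (∀ i, X i ∈ transportPolytope (a i) (b i)) →
      ∀ i, ∀ Y ∈ transportPolytope (a i) (b i),
        f (Function.update X i Y) ≤
          f X + finner (gradf X i) (Y - X i) + L / 2 * (frob (Y - X i)) ^ 2)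
    (α lam : ℝ) (hα : α ∈ Set.Ioc (0 : ℝ) 1) (hlam : 0 < lam)
    (X Xtil : ℕ → ∀ i, Matrix (Fin (m i)) (Fin (n i)) ℝ)
    (hfeas0 : ∀ i, X 0 i ∈ transportPolytope (a i) (b i))
    -- intermediate points `(X_{<i}^{(t+1)}, X_{≥i}^{(t)})`
    (Z : ℕ → Fin N → ∀ i, Matrix (Fin (m i)) (Fin (n i)) ℝ)
    (hZ : ∀ t i j, Z t i j = if (j : ℕ) < (i : ℕ) then X (t + 1) j else X t j)
    -- `X̃_i^{(t+1)}` exactly solves the entropy-regularized subproblem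
    (hsub : ∀ t i, Xtil t i ∈ transportPolytope (a i) (b i) ∧
      ∀ T ∈ transportPolytope (a i) (b i),
        finner (gradf (Z t i) i) (Xtil t i) + lam * negEntropy (Xtil t i) ≤
          finner (gradf (Z t i) i) T + lam * negEntropy T)
    -- convex-combination update
    (hupd : ∀ t i, X (t + 1) i = (1 - α) • X t i + α • Xtil t i)
    (hbar dbar : ℝ)
    (hhbar : hbar = -(⨅ i, negEntropy (fun j k => a i j * b i k)))
    (hdbar : dbar = ⨆ i,
      min (Real.sqrt (m i) * (⨆ j, |a i j|)) (Real.sqrt (n i) * (⨆ k, |b i k|))) :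
    ∀ t, ∑ i, blockResidual a b gradf (X t) i ≤
      (f (X t) - f (X (t + 1))) / α + N * lam * hbar +
        2 * dbar ^ 2 * L * N * (2 * Real.sqrt N + 1) * α := by
  obtain ⟨hα0, hα1⟩ := hα
  -- feasibility of all iterates
  have hfeas : ∀ s i, X s i ∈ transportPolytope (a i) (b i) := by
    intro s
    induction s with
    | zero => exact hfeas0
    | succ s ih =>
      intro i
      rw [hupd s i]
      exact convex_mem (le_of_lt hα0) hα1 (ih i) (hsub s i).1
  -- frob of any feasible point is at most dbar
  have hdub : ∀ i, ∀ T ∈ transportPolytope (a i) (b i), frob T ≤ dbar := by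
    intro i T hT
    have hmne : 0 < m i := by
      rcases Nat.eq_zero_or_pos (m i) with h | h
      · exfalso
        have h2 := hsa i
        have : IsEmpty (Fin (m i)) := by rw [h]; infer_instance
        rw [Finset.univ_eq_empty, Finset.sum_empty] at h2
        norm_num at h2
      · exact h
    have hnne : 0 < n i := by
      rcases Nat.eq_zero_or_pos (n i) with h | h
      · exfalso
        have h2 := hsb i
        have : IsEmpty (Fin (n i)) := by rw [h]; infer_instance
        rw [Finset.univ_eq_empty, Finset.sum_empty] at h2
        norm_num at h2
      · exact h
    have hsupa : ∀ j, a i j ≤ ⨆ j', |a i j'| := fun j =>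
      (le_abs_self _).trans
        (le_ciSup (f := fun j' => |a i j'|) (Set.finite_range _).bddAbove j)
    have h0a : 0 ≤ ⨆ j', |a i j'| :=
      le_trans (abs_nonneg (a i ⟨0, hmne⟩))
        (le_ciSup (f := fun j' => |a i j'|) (Set.finite_range _).bddAbove ⟨0, hmne⟩)
    have hsupb : ∀ k, b i k ≤ ⨆ k', |b i k'| := fun k =>
      (le_abs_self _).trans
        (le_ciSup (f := fun k' => |b i k'|) (Set.finite_range _).bddAbove k)
    have h0b : 0 ≤ ⨆ k', |b i k'| :=
      le_trans (abs_nonneg (b i ⟨0, hnne⟩))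
        (le_ciSup (f := fun k' => |b i k'|) (Set.finite_range _).bddAbove ⟨0, hnne⟩)
    have r1 : frob T ≤ Real.sqrt (m i) * ⨆ j', |a i j'| := frob_le_row hT hsupa h0a
    have r2 : frob T ≤ Real.sqrt (n i) * ⨆ k', |b i k'| := frob_le_col hT hsupb h0b
    have : frob T ≤ min (Real.sqrt (m i) * ⨆ j', |a i j'|)
        (Real.sqrt (n i) * ⨆ k', |b i k'|) := le_min r1 r2
    rw [hdbar]
    exact this.trans (le_ciSup (f := fun i' => min (Real.sqrt (m i') * ⨆ j, |a i' j|)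
      (Real.sqrt (n i') * ⨆ k, |b i' k|)) (Set.finite_range _).bddAbove i)
  have hd0 : 0 ≤ dbar :=
    (frob_nonneg _).trans (hdub ⟨0, hN⟩ _ (prodMem (ha _) (hb _) (hsa _) (hsb _)))
  -- entropy bound for the regularized minimizers
  have hent : ∀ s i, -(negEntropy (Xtil s i)) ≤ hbar := by
    intro s i
    have h1 : negEntropy (fun j k => a i j * b i k) ≤ negEntropy (Xtil s i) :=
      gibbs (ha i) (hb i) (hsa i) (hsb i) (hsub s i).1
    have h2 : (⨅ i', negEntropy (fun j k => a i' j * b i' k)) ≤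
        negEntropy (fun j k => a i j * b i k) :=
      ciInf_le (Set.finite_range _).bddBelow i
    rw [hhbar]; linarith
  intro t
  have hZmem : ∀ i j, Z t i j ∈ transportPolytope (a j) (b j) := by
    intro i j
    rw [hZ t i j]
    split
    · exact hfeas (t+1) j
    · exact hfeas t j
  have hZii : ∀ i : Fin N, Z t i i = X t i := by
    intro i; rw [hZ t i i]; simp
  set F : ℕ → ℝ := fun k => f (fun j => if (j:ℕ) < k then X (t+1) j else X t j) with hF
  have hF0 : F 0 = f (X t) := by simp [hF]
  have hFN : F N = f (X (t+1)) := by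
    simp only [hF]
    congr 1
    funext j
    rw [if_pos j.isLt]
  have hFi : ∀ i : Fin N, F i = f (Z t i) := by
    intro i
    simp only [hF]
    congr 1
    funext j
    rw [hZ t i j]
  have hFsucc : ∀ i : Fin N, F ((i:ℕ)+1) = f (Function.update (Z t i) i (X (t+1) i)) := by
    intro i
    simp only [hF]
    congr 1
    funext j
    rcases eq_or_ne j i with h | h
    · subst h
      rw [Function.update_self, if_pos (Nat.lt_succ_self _)]
    · rw [Function.update_of_ne h, hZ t i j]
      have hne : (j:ℕ) ≠ (i:ℕ) := fun hc => h (Fin.ext hc)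
      by_cases hlt : (j:ℕ) < (i:ℕ)
      · rw [if_pos hlt, if_pos (Nat.lt_succ_of_lt hlt)]
      · rw [if_neg hlt, if_neg (by omega)]
  -- per-block bound
  have hblock : ∀ i : Fin N, blockResidual a b gradf (X t) i ≤
      (F i - F ((i:ℕ)+1))/α + lam * hbar + 2*L*α*dbar^2 +
        4*L*dbar^2*Real.sqrt N*α := by
    intro i
    -- gradient perturbation bound
    have hft : frobTotal (fun j => X t j - Z t i j) ≤ Real.sqrt N * (2*dbar*α) := by
      have hsum : ∑ j, ∑ p, ∑ q, ((X t j - Z t i j) p q)^2 ≤ (N:ℝ) * (2*dbar*α)^2 := by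
        calc ∑ j, ∑ p, ∑ q, ((X t j - Z t i j) p q)^2
            ≤ ∑ _j : Fin N, (2*dbar*α)^2 := by
              apply Finset.sum_le_sum; intro j _
              have hfr : frob (X t j - Z t i j) ≤ 2*dbar*α := by
                rw [hZ t i j]
                split
                · have hdiff : X t j - X (t+1) j = α • (X t j - Xtil t j) := by
                    rw [hupd t j]; module
                  rw [hdiff, frob_smul, abs_of_pos hα0]
                  have h1 : frob (X t j - Xtil t j) ≤ 2*dbar := by
                    have := frob_sub_le (X t j) (Xtil t j)
                    have h2 := hdub j _ (hfeas t j)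
                    have h3 := hdub j _ (hsub t j).1
                    linarith
                  nlinarith
                · simp only [sub_self]
                  have : frob (0 : Matrix (Fin (m j)) (Fin (n j)) ℝ) = 0 := by
                    simp [frob]
                  rw [this]
                  positivity
              calc ∑ p, ∑ q, ((X t j - Z t i j) p q)^2
                  = (frob (X t j - Z t i j))^2 := by
                    rw [frob, Real.sq_sqrt]
                    exact Finset.sum_nonneg fun p _ =>
                      Finset.sum_nonneg fun q _ => sq_nonneg _
              _ ≤ (2*dbar*α)^2 := pow_le_pow_left₀ (frob_nonneg _) hfr 2
        _ = (N:ℝ) * (2*dbar*α)^2 := by simp [mul_comm]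
      calc frobTotal (fun j => X t j - Z t i j)
          ≤ Real.sqrt ((N:ℝ) * (2*dbar*α)^2) := Real.sqrt_le_sqrt hsum
      _ = Real.sqrt N * (2*dbar*α) := by
          rw [Real.sqrt_mul (by positivity), Real.sqrt_sq (by positivity)]
    have hgg' : frob (gradf (X t) i - gradf (Z t i) i) ≤ L * (Real.sqrt N * (2*dbar*α)) := by
      have h1 := hlip (X t) (Z t i) (hfeas t) (hZmem i) i
      have h2 : L * frobTotal (fun j => X t j - Z t i j) ≤ L * (Real.sqrt N * (2*dbar*α)) :=
        mul_le_mul_of_nonneg_left hft (le_of_lt hL)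
      linarith
    -- descent step
    have hdes := hdesc (Z t i) (hZmem i) i (X (t+1) i) (hfeas (t+1) i)
    rw [hZii i, ← hFi i, ← hFsucc i] at hdes
    have hdiff : X (t+1) i - X t i = α • (Xtil t i - X t i) := by
      rw [hupd t i]; module
    rw [hdiff, finner_smul_right, frob_smul, abs_of_pos hα0, mul_pow] at hdes
    have hfd : frob (Xtil t i - X t i) ≤ 2*dbar := by
      have := frob_sub_le (Xtil t i) (X t i)
      have h2 := hdub i _ (hsub t i).1
      have h3 := hdub i _ (hfeas t i)
      linarith
    have hfd2 : (frob (Xtil t i - X t i))^2 ≤ 4*dbar^2 := by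
      have := pow_le_pow_left₀ (frob_nonneg _) hfd 2
      nlinarith
    have hdes2 : α * finner (gradf (Z t i) i) (X t i - Xtil t i) ≤
        F i - F ((i:ℕ)+1) + 2*L*α^2*dbar^2 := by
      have hsw : finner (gradf (Z t i) i) (X t i - Xtil t i)
          = -(finner (gradf (Z t i) i) (Xtil t i - X t i)) := by
        rw [finner_sub_right, finner_sub_right]; ring
      rw [hsw]
      have hc : (0:ℝ) ≤ L/2*α^2 := mul_nonneg (by linarith) (sq_nonneg α)
      nlinarith [hdes, mul_le_mul_of_nonneg_left hfd2 hc]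
    have hdes3 : finner (gradf (Z t i) i) (X t i - Xtil t i) ≤
        (F i - F ((i:ℕ)+1))/α + 2*L*α*dbar^2 := by
      rw [div_add' _ _ _ (ne_of_gt hα0), le_div_iff₀ hα0]
      nlinarith [hdes2]
    -- bound each element of the sup
    haveI : Nonempty ↥(transportPolytope (a i) (b i)) :=
      ⟨⟨_, prodMem (ha i) (hb i) (hsa i) (hsb i)⟩⟩
    apply ciSup_le
    rintro ⟨T, hT⟩
    have hTb : frob (X t i - T) ≤ 2*dbar := by
      have := frob_sub_le (X t i) T
      have h2 := hdub i _ (hfeas t i)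
      have h3 := hdub i _ hT
      linarith
    have hpert : finner (gradf (X t) i - gradf (Z t i) i) (X t i - T) ≤
        4*L*dbar^2*Real.sqrt N*α := by
      have h1 := (abs_le.mp (abs_finner_le (gradf (X t) i - gradf (Z t i) i) (X t i - T))).2
      have h2 : frob (gradf (X t) i - gradf (Z t i) i) * frob (X t i - T) ≤
          (L * (Real.sqrt N * (2*dbar*α))) * (2*dbar) := by
        apply mul_le_mul hgg' hTb (frob_nonneg _)
        have : (0:ℝ) ≤ Real.sqrt N * (2*dbar*α) := by positivity
        positivity
      calc finner (gradf (X t) i - gradf (Z t i) i) (X t i - T)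
          ≤ (L * (Real.sqrt N * (2*dbar*α))) * (2*dbar) := le_trans h1 h2
      _ = 4*L*dbar^2*Real.sqrt N*α := by ring
    have hentT : finner (gradf (Z t i) i) (X t i - T) ≤
        finner (gradf (Z t i) i) (X t i - Xtil t i) + lam * hbar := by
      have hopt := (hsub t i).2 T hT
      have hT0 : negEntropy T ≤ 0 := negEntropy_nonpos (hsa i) hT
      have hXt0 := hent t i
      have hsplit : finner (gradf (Z t i) i) (X t i - T)
          = finner (gradf (Z t i) i) (X t i - Xtil t i)
            + (finner (gradf (Z t i) i) (Xtil t i) - finner (gradf (Z t i) i) T) := by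
        rw [finner_sub_right, finner_sub_right]; ring
      have hlamb : lam * (negEntropy T - negEntropy (Xtil t i)) ≤ lam * hbar := by
        apply mul_le_mul_of_nonneg_left _ (le_of_lt hlam)
        linarith
      linarith [hopt, hlamb, hsplit]
    calc finner (gradf (X t) i) (X t i - T)
        = finner (gradf (Z t i) i) (X t i - T)
          + finner (gradf (X t) i - gradf (Z t i) i) (X t i - T) := by
          rw [finner_sub_left]; ring
    _ ≤ (finner (gradf (Z t i) i) (X t i - Xtil t i) + lam * hbar)
          + 4*L*dbar^2*Real.sqrt N*α := by linarith
    _ ≤ ((F i - F ((i:ℕ)+1))/α + 2*L*α*dbar^2 + lam * hbar)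
          + 4*L*dbar^2*Real.sqrt N*α := by linarith
    _ = (F i - F ((i:ℕ)+1))/α + lam * hbar + 2*L*α*dbar^2
          + 4*L*dbar^2*Real.sqrt N*α := by ring
  -- sum up
  have hsum := Finset.sum_le_sum (fun i (_ : i ∈ Finset.univ) => hblock i)
  have htel : ∑ i : Fin N, (F i - F ((i:ℕ)+1)) = f (X t) - f (X (t+1)) := by
    rw [Fin.sum_univ_eq_sum_range (fun k => F k - F (k+1)) N,
      Finset.sum_range_sub' F N, hF0, hFN]
  calc ∑ i, blockResidual a b gradf (X t) i
      ≤ ∑ i : Fin N, ((F i - F ((i:ℕ)+1))/α + lam * hbar + 2*L*α*dbar^2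
          + 4*L*dbar^2*Real.sqrt N*α) := hsum
  _ = (∑ i : Fin N, (F i - F ((i:ℕ)+1)))/α
        + N * (lam * hbar) + N * (2*L*α*dbar^2 + 4*L*dbar^2*Real.sqrt N*α) := by
      simp only [Finset.sum_add_distrib, Finset.sum_div, Finset.sum_const,
        Finset.card_univ, Fintype.card_fin, nsmul_eq_mul]
      ring
  _ = (f (X t) - f (X (t+1)))/α + N * lam * hbar +
        2 * dbar ^ 2 * L * N * (2 * Real.sqrt N + 1) * α := by
      rw [htel]; ring
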